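/- Let U be a chi-squared random variable with d degrees of freedom, i.e., distributed as the sum of squares of d independent standard Gaussian random variables (equivalently, a Gamma distribution with shape d/2 and rate 1/2). Then for any α ∈ (0,1), P( U ≥ d + 2√(d log(1/α)) + 2 log(1/α) ) ≤ α. -/

import Mathlib

open MeasureTheory ProbabilityTheory
open scoped BigOperators ENNReal

open MeasureTheory ProbabilityTheory Real
open scoped ENNReal NNReal

lemma gauss_density_eq (l : ℝ) (x : ℝ) :
    gaussianPDFReal 0 1 x * Real.exp (l * x ^ 2)
      = (Real.sqrt (2 * Real.pi))⁻¹ * Real.exp (-(1/2 - l) * x ^ 2) := by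
  simp only [gaussianPDFReal, NNReal.coe_one, mul_one, sub_zero]
  rw [mul_assoc, ← Real.exp_add]
  ring_nf

lemma gauss_smul_eq (l : ℝ) :
    (fun x => (gaussianPDFReal 0 1 x).toNNReal • Real.exp (l * x ^ 2))
      = fun x : ℝ => (Real.sqrt (2 * Real.pi))⁻¹ * Real.exp (-(1/2 - l) * x ^ 2) := by
  funext x
  rw [NNReal.smul_def, smul_eq_mul, Real.coe_toNNReal _ (gaussianPDFReal_nonneg 0 1 x),
    gauss_density_eq]

lemma gauss_sq_integrable {l : ℝ} (hl : l < 1/2) :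
    Integrable (fun x => Real.exp (l * x ^ 2)) (gaussianReal 0 1) := by
  rw [gaussianReal_of_var_ne_zero _ one_ne_zero, gaussianPDF_def]
  have h : ∀ x : ℝ, ENNReal.ofReal (gaussianPDFReal 0 1 x)
      = ((gaussianPDFReal 0 1 x).toNNReal : ℝ≥0∞) := fun x => rfl
  simp_rw [h]
  rw [integrable_withDensity_iff_integrable_smul
    (measurable_gaussianPDFReal 0 1).real_toNNReal, gauss_smul_eq]
  exact (integrable_exp_neg_mul_sq (by linarith)).const_mul _

lemma gauss_sq_integral {l : ℝ} (hl : l < 1/2) :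
    ∫ x, Real.exp (l * x ^ 2) ∂(gaussianReal 0 1) = (Real.sqrt (1 - 2*l))⁻¹ := by
  rw [gaussianReal_of_var_ne_zero _ one_ne_zero, gaussianPDF_def]
  have h : ∀ x : ℝ, ENNReal.ofReal (gaussianPDFReal 0 1 x)
      = ((gaussianPDFReal 0 1 x).toNNReal : ℝ≥0∞) := fun x => rfl
  simp_rw [h]
  rw [integral_withDensity_eq_integral_smul
    (measurable_gaussianPDFReal 0 1).real_toNNReal, gauss_smul_eq,
    integral_const_mul, integral_gaussian]
  have h1 : (0:ℝ) < 1 - 2*l := by linarith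
  have h2 : (0:ℝ) < 2 * Real.pi := by positivity
  have h3 : Real.pi / (1/2 - l) = (2*Real.pi) / (1 - 2*l) := by
    rw [div_eq_div_iff (by linarith) h1.ne']; ring
  rw [h3, Real.sqrt_div h2.le]
  have h4 : Real.sqrt (2*Real.pi) ≠ 0 := by positivity
  field_simp

lemma lm_numeric {d : ℕ} (hd : 0 < d) {x t l : ℝ} (hx : 0 < x)
    (ht : t = (d:ℝ) + 2*Real.sqrt ((d:ℝ)*x) + 2*x) (hl : l = (1 - (d:ℝ)/t)/2) :
    Real.exp (-l * t) * ((Real.sqrt (1-2*l))⁻¹)^d ≤ Real.exp (-x) := by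
  have hd0 : (0:ℝ) < d := Nat.cast_pos.mpr hd
  set s := Real.sqrt (x/(d:ℝ)) with hs
  have hs0 : 0 ≤ s := Real.sqrt_nonneg _
  have hs2 : s^2 = x/(d:ℝ) := Real.sq_sqrt (div_nonneg hx.le hd0.le)
  have hx_eq : x = (d:ℝ) * s^2 := by rw [hs2]; field_simp
  have hsd : Real.sqrt ((d:ℝ)*x) = (d:ℝ) * s := by
    have h1 : (d:ℝ)*x = (d:ℝ)^2 * (x/(d:ℝ)) := by field_simp
    rw [h1, Real.sqrt_mul (sq_nonneg _), Real.sqrt_sq hd0.le]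
  have ht' : t = (d:ℝ) * (1 + 2*s + 2*s^2) := by rw [ht, hsd, hx_eq]; ring
  have hpos : (0:ℝ) < 1 + 2*s + 2*s^2 := by positivity
  have ht0 : 0 < t := by rw [ht']; positivity
  have h12l : 1 - 2*l = (d:ℝ)/t := by rw [hl]; ring
  have htd : t/(d:ℝ) = 1 + 2*s + 2*s^2 := by rw [ht']; field_simp
  have hsqrt : (Real.sqrt (1-2*l))⁻¹ = Real.sqrt (1 + 2*s + 2*s^2) := by
    rw [h12l, ← Real.sqrt_inv, inv_div, htd]
  have hlt : l * t = (t - (d:ℝ))/2 := by rw [hl]; field_simp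
  have hq : 1 + 2*s + 2*s^2 ≤ Real.exp (2*s) := by
    have h := Real.quadratic_le_exp_of_nonneg (x := 2*s) (by positivity)
    nlinarith
  have hsle : Real.sqrt (1 + 2*s + 2*s^2) ≤ Real.exp s := by
    have h2 : Real.exp (2*s) = (Real.exp s)^2 := by rw [two_mul, Real.exp_add, sq]
    have h3 := Real.sqrt_le_sqrt hq
    rwa [h2, Real.sqrt_sq (Real.exp_pos s).le] at h3
  have hpow : (Real.sqrt (1 + 2*s + 2*s^2))^d ≤ Real.exp ((d:ℝ)*s) := by
    calc (Real.sqrt (1 + 2*s + 2*s^2))^d ≤ (Real.exp s)^d :=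
          pow_le_pow_left₀ (Real.sqrt_nonneg _) hsle d
      _ = Real.exp ((d:ℝ)*s) := (Real.exp_nat_mul s d).symm
  rw [hsqrt, neg_mul, hlt]
  calc Real.exp (-((t - (d:ℝ))/2)) * (Real.sqrt (1 + 2*s + 2*s^2))^d
      ≤ Real.exp (-((t - (d:ℝ))/2)) * Real.exp ((d:ℝ)*s) := by
        exact mul_le_mul_of_nonneg_left hpow (Real.exp_pos _).le
    _ = Real.exp (-((t - (d:ℝ))/2) + (d:ℝ)*s) := (Real.exp_add _ _).symm
    _ = Real.exp (-x) := by congr 1; rw [ht', hx_eq]; ring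


/-- Upper-tail Laurent–Massart inequality for chi-squared random variables: if
`U = Σ_{i<d} v_i²` with `v_i` i.i.d. standard Gaussians, then for `α ∈ (0,1)`,
`P(U ≥ d + 2√(d log(1/α)) + 2 log(1/α)) ≤ α`. -/
theorem chi_squared_upper_tail {Ω : Type*} [MeasurableSpace Ω]
    (P : Measure Ω) [IsProbabilityMeasure P] (d : ℕ)
    (v : Fin d → Ω → ℝ) (hmeas : ∀ i, Measurable (v i))
    (hindep : iIndepFun v P)
    (hgauss : ∀ i, P.map (v i) = gaussianReal 0 1)
    (U : Ω → ℝ) (hU : ∀ ω, U ω = ∑ i, v i ω ^ 2)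
    (α : ℝ) (hα : α ∈ Set.Ioo (0 : ℝ) 1) :
    P {ω | (d : ℝ) + 2 * Real.sqrt ((d : ℝ) * Real.log (1 / α)) + 2 * Real.log (1 / α) ≤ U ω}
      ≤ ENNReal.ofReal α := by
  obtain ⟨hα0, hα1⟩ := hα
  set x := Real.log (1/α) with hxdef
  have hx0 : 0 < x := Real.log_pos (by rw [lt_div_iff₀ hα0]; linarith)
  have hexpx : Real.exp (-x) = α := by
    rw [hxdef, one_div, Real.log_inv, neg_neg, Real.exp_log hα0]
  rcases Nat.eq_zero_or_pos d with hd | hd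
  · subst hd
    have hempty : {ω | (0:ℕ) + 2 * Real.sqrt ((0:ℕ) * x) + 2 * x ≤ U ω} = ∅ := by
      ext ω
      simp only [Set.mem_setOf_eq, Set.mem_empty_iff_false, iff_false, not_le, hU ω]
      simp [hx0]
    rw [show ((0:ℕ):ℝ) = (0:ℝ) by norm_num] at hempty ⊢
    rw [hempty]
    simp
  -- main case
  have hd0 : (0:ℝ) < d := Nat.cast_pos.mpr hd
  set t := (d:ℝ) + 2 * Real.sqrt ((d:ℝ) * x) + 2 * x with htdef
  have ht0 : 0 < t := by
    have := Real.sqrt_nonneg ((d:ℝ)*x); rw [htdef]; linarith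
  set l := (1 - (d:ℝ)/t)/2 with hldef
  have hl2 : l < 1/2 := by
    have : 0 < (d:ℝ)/t := div_pos hd0 ht0
    rw [hldef]; linarith
  have hl0 : 0 ≤ l := by
    have hdt : (d:ℝ) ≤ t := by
      have := Real.sqrt_nonneg ((d:ℝ)*x); rw [htdef]; linarith
    have : (d:ℝ)/t ≤ 1 := (div_le_one ht0).mpr hdt
    rw [hldef]; linarith
  set W : Fin d → Ω → ℝ := fun i => (fun y : ℝ => y ^ 2) ∘ v i with hWdef
  have hUW : U = ∑ i, W i := by
    funext ω
    rw [hU ω, Finset.sum_apply]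
    rfl
  have hWmeas : ∀ i, Measurable (W i) := fun i => (hmeas i).pow_const 2
  have hWindep : iIndepFun W P :=
    hindep.comp _ (fun i => measurable_id.pow_const 2)
  have hsm : AEStronglyMeasurable (fun y : ℝ => Real.exp (l * y ^ 2)) (gaussianReal 0 1) :=
    (Measurable.exp ((measurable_id.pow_const 2).const_mul l)).aestronglyMeasurable
  have hint : ∀ i, Integrable (fun ω => Real.exp (l * W i ω)) P := by
    intro i
    have h1 := gauss_sq_integrable hl2
    rw [← hgauss i] at h1
    exact (integrable_map_measure (by rw [hgauss i]; exact hsm) (hmeas i).aemeasurable).mp h1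
  have hmgfi : ∀ i, mgf (W i) P l = (Real.sqrt (1 - 2*l))⁻¹ := by
    intro i
    have h1 := gauss_sq_integral hl2
    rw [← hgauss i, integral_map (hmeas i).aemeasurable (by rw [hgauss i]; exact hsm)] at h1
    exact h1
  have h_int : Integrable (fun ω => Real.exp (l * U ω)) P := by
    rw [hUW]
    exact hWindep.integrable_exp_mul_sum hWmeas (fun i _ => hint i)
  have hch := measure_ge_le_exp_mul_mgf (μ := P) (X := U) t hl0 h_int
  have hmgf : mgf U P l = ((Real.sqrt (1 - 2*l))⁻¹)^d := by
    rw [hUW, hWindep.mgf_sum hWmeas]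
    rw [Finset.prod_congr rfl (fun i _ => hmgfi i), Finset.prod_const, Finset.card_univ,
      Fintype.card_fin]
  rw [hmgf] at hch
  have hnum := lm_numeric hd hx0 htdef hldef
  have hfin : (P {ω | t ≤ U ω}).toReal ≤ α := le_trans hch (by rw [← hexpx]; exact hnum)
  have hne : P {ω | t ≤ U ω} ≠ ⊤ := measure_ne_top P _
  calc P {ω | t ≤ U ω} = ENNReal.ofReal ((P {ω | t ≤ U ω}).toReal) :=
        (ENNReal.ofReal_toReal hne).symm
    _ ≤ ENNReal.ofReal α := ENNReal.ofReal_le_ofReal hfin
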